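/- Let X be a complex Banach space, K ⊆ X nonempty compact, U_n := K + B_{1/n}(0), and E_n := Hol_b(U_n, X)_K the Banach space of bounded analytic maps U_n → X vanishing on K, with sup-norm. Then for every n, setting m := 6n, for every l ≥ m and every ε > 0 there exists δ > 0 such that any γ₁, γ₂ in the unit ball of E_n with ‖γ₁|_{U_l} − γ₂|_{U_l}‖_∞ ≤ δ satisfy ‖γ₁|_{U_m} − γ₂|_{U_m}‖_∞ ≤ ε. In other words, all the norms of E_l for l ≥ 6n induce the same topology on the unit ball of E_n. -/

import Mathlib

open Metric Pointwise

lemma cauchy_coeff_bound {E : Type*} [NormedAddCommGroup E] [NormedSpace ℂ E] {f : ℂ → E}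
    {R C : ℝ} (hR : 0 < R) (hf : ContinuousOn f (sphere (0:ℂ) R))
    (hb : ∀ z ∈ sphere (0:ℂ) R, ‖f z‖ ≤ C) (k : ℕ) :
    ‖cauchyPowerSeries f 0 R k‖ ≤ C * (R⁻¹) ^ k := by
  have hC : 0 ≤ C := le_trans (norm_nonneg _) (hb _ (circleMap_mem_sphere _ hR.le 0))
  refine (norm_cauchyPowerSeries_le f 0 R k).trans ?_
  have hmem : ∀ θ : ℝ, circleMap 0 R θ ∈ sphere (0:ℂ) R :=
    fun θ => circleMap_mem_sphere _ hR.le _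
  have hcont : Continuous fun θ : ℝ => ‖f (circleMap 0 R θ)‖ :=
    (hf.comp_continuous (continuous_circleMap 0 R) hmem).norm
  have hint : (∫ θ in (0:ℝ)..2 * Real.pi, ‖f (circleMap 0 R θ)‖) ≤
      ∫ _ in (0:ℝ)..2 * Real.pi, C :=
    intervalIntegral.integral_mono_on Real.two_pi_pos.le
      (hcont.intervalIntegrable _ _) intervalIntegrable_const
      (fun θ _ => hb _ (hmem θ))
  rw [intervalIntegral.integral_const, smul_eq_mul] at hint
  have h2pi : (0:ℝ) < 2 * Real.pi := Real.two_pi_pos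
  calc ((2 * Real.pi)⁻¹ * ∫ θ in (0:ℝ)..2 * Real.pi, ‖f (circleMap 0 R θ)‖) * |R|⁻¹ ^ k
      ≤ ((2 * Real.pi)⁻¹ * ((2 * Real.pi - 0) * C)) * |R|⁻¹ ^ k := by
        gcongr
    _ = C * (R⁻¹) ^ k := by
        rw [abs_of_pos hR, sub_zero, ← mul_assoc, inv_mul_cancel₀ h2pi.ne', one_mul]

set_option maxHeartbeats 1000000
/-- Key estimate in Proposition 3.3 (compact regularity of `Germ(K,X)_K`): with
`U_n = K + B_{1/n}(0)` around a nonempty compact set `K` in a complex Banach space, for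
`m := 6n` and any `l ≥ m`, the sup-norms over `U_l` and over `U_m` induce the same
topology on the unit ball of `Hol_b(U_n, X)_K`: for every `ε > 0` there is a `δ > 0` such
that bounded analytic maps `γ₁, γ₂` on `U_n` vanishing on `K` with sup-norm at most `1`
and `sup_{U_l} ‖γ₁ - γ₂‖ ≤ δ` satisfy `sup_{U_{6n}} ‖γ₁ - γ₂‖ ≤ ε`. -/
theorem stmt14 {X : Type*} [NormedAddCommGroup X] [NormedSpace ℂ X] [CompleteSpace X]
    (K : Set X) (hKc : IsCompact K) (hKne : K.Nonempty) (n : ℕ) (hn : 0 < n)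
    (l : ℕ) (hl : 6 * n ≤ l) (ε : ℝ) (hε : 0 < ε) :
    ∃ δ > (0 : ℝ), ∀ γ₁ γ₂ : X → X,
      AnalyticOnNhd ℂ γ₁ (K + ball (0 : X) (1 / (n : ℝ))) →
      AnalyticOnNhd ℂ γ₂ (K + ball (0 : X) (1 / (n : ℝ))) →
      (∀ a ∈ K, γ₁ a = 0) → (∀ a ∈ K, γ₂ a = 0) →
      (∀ x ∈ K + ball (0 : X) (1 / (n : ℝ)), ‖γ₁ x‖ ≤ 1) →
      (∀ x ∈ K + ball (0 : X) (1 / (n : ℝ)), ‖γ₂ x‖ ≤ 1) →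
      (∀ x ∈ K + ball (0 : X) (1 / (l : ℝ)), ‖γ₁ x - γ₂ x‖ ≤ δ) →
      ∀ x ∈ K + ball (0 : X) (1 / (6 * (n : ℝ))), ‖γ₁ x - γ₂ x‖ ≤ ε := by
  have hn' : (0:ℝ) < n := by exact_mod_cast hn
  have hl0 : 0 < l := lt_of_lt_of_le (by omega) hl
  have hl' : (0:ℝ) < l := by exact_mod_cast hl0
  have hln : (6:ℝ) * n ≤ l := by exact_mod_cast hl
  -- choose k₀
  obtain ⟨k₀, hk₀⟩ : ∃ k : ℕ, ((6:ℝ)⁻¹) ^ k < 5 * ε / 24 :=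
    exists_pow_lt_of_lt_one (by positivity) (by norm_num)
  set Q : ℝ := (l:ℝ) / (3 * n) with hQdef
  have hQ1 : (1:ℝ) ≤ Q := by
    rw [hQdef, le_div_iff₀ (by positivity)]; linarith
  have hQpos : (0:ℝ) < Q := lt_of_lt_of_le one_pos hQ1
  set δ : ℝ := min ε ((ε / 2) / (k₀ * Q ^ k₀ + 1)) with hδdef
  have hδpos : 0 < δ := lt_min hε (by positivity)
  have hδε : δ ≤ ε := min_le_left _ _
  have hδ2 : δ ≤ (ε / 2) / (k₀ * Q ^ k₀ + 1) := min_le_right _ _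
  clear_value Q δ
  refine ⟨δ, hδpos, ?_⟩
  intro γ₁ γ₂ h1 h2 hz1 hz2 hb1 hb2 hδl x hx
  rw [Set.mem_add] at hx
  obtain ⟨a, ha, v, hv, rfl⟩ := hx
  rw [mem_ball_zero_iff] at hv
  by_cases hcase : ‖v‖ < 1 / l
  · exact le_trans (hδl _ (Set.add_mem_add ha (mem_ball_zero_iff.2 hcase))) hδε
  push_neg at hcase
  have hvpos : 0 < ‖v‖ := lt_of_lt_of_le (by positivity) hcase
  set g : ℂ → X := fun lam => γ₁ (a + lam • v) - γ₂ (a + lam • v) with hgdef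
  -- membership helper
  have hmemU : ∀ (lam : ℂ) (s : ℝ), ‖lam‖ * ‖v‖ < 1 / s →
      a + lam • v ∈ K + ball (0:X) (1 / s) := by
    intro lam s hls
    exact Set.add_mem_add ha (mem_ball_zero_iff.2 (by rwa [norm_smul]))
  have hsmalln : ∀ lam : ℂ, ‖lam‖ ≤ 6 → ‖lam‖ * ‖v‖ < 1 / n := by
    intro lam hlam
    calc ‖lam‖ * ‖v‖ ≤ 6 * ‖v‖ := by nlinarith [norm_nonneg lam, norm_nonneg v]
      _ < 6 * (1 / (6 * n)) := by nlinarith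
      _ = 1 / n := by field_simp
  -- differentiability on closed ball of radius 6
  have hdiff : DifferentiableOn ℂ g (closedBall (0:ℂ) ((6:NNReal):ℝ)) := by
    intro lam hlam
    rw [mem_closedBall, dist_zero_right] at hlam
    have hlam6 : ‖lam‖ ≤ 6 := by
      refine hlam.trans ?_; norm_num
    have hmem := hmemU lam n (hsmalln lam hlam6)
    have hc : DifferentiableAt ℂ (fun mu : ℂ => a + mu • v) lam :=
      (differentiableAt_const a).add (differentiableAt_id.smul_const v)
    exact (((h1 _ hmem).differentiableAt.comp lam hc).sub
      ((h2 _ hmem).differentiableAt.comp lam hc)).differentiableWithinAt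
  have h6 : HasFPowerSeriesOnBall g (cauchyPowerSeries g 0 ((6:NNReal):ℝ)) 0 (6:NNReal) :=
    hdiff.hasFPowerSeriesOnBall (by norm_num)
  set p := cauchyPowerSeries g 0 ((6:NNReal):ℝ) with hpdef
  -- the small radius
  set r : ℝ := 1 / (2 * l * ‖v‖) with hrdef
  have hr : 0 < r := by positivity
  have hr6 : r ≤ ((6:NNReal):ℝ) := by
    have : (2:ℝ) ≤ 2 * l * ‖v‖ := by
      calc (2:ℝ) = 2 * l * (1/l) := by field_simp
        _ ≤ 2 * l * ‖v‖ := by gcongr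
    have : r ≤ 1/2 := by
      rw [hrdef, div_le_div_iff₀ (by linarith) (by norm_num)]; linarith
    push_cast; linarith
  have hrcoe : ((r.toNNReal : NNReal) : ℝ) = r := Real.coe_toNNReal _ hr.le
  have hdiff' : DifferentiableOn ℂ g (closedBall (0:ℂ) ((r.toNNReal : NNReal) : ℝ)) :=
    hdiff.mono (closedBall_subset_closedBall (by rw [hrcoe]; exact hr6))
  have hrball : HasFPowerSeriesOnBall g
      (cauchyPowerSeries g 0 ((r.toNNReal : NNReal) : ℝ)) 0 r.toNNReal :=
    hdiff'.hasFPowerSeriesOnBall (Real.toNNReal_pos.2 hr)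
  have hpq : p = cauchyPowerSeries g 0 ((r.toNNReal : NNReal) : ℝ) :=
    h6.hasFPowerSeriesAt.eq_formalMultilinearSeries hrball.hasFPowerSeriesAt
  have hcont : ContinuousOn g (closedBall (0:ℂ) ((6:NNReal):ℝ)) := hdiff.continuousOn
  -- big-radius coefficient bound
  have hbig : ∀ k, ‖p k‖ ≤ 2 * ((6:ℝ)⁻¹) ^ k := by
    intro k
    have h6' : ((6:NNReal):ℝ) = (6:ℝ) := by norm_num
    rw [hpdef, h6']
    refine cauchy_coeff_bound (by norm_num)
      (hcont.mono (by rw [h6']; exact sphere_subset_closedBall)) ?_ k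
    intro z hz
    rw [mem_sphere_zero_iff_norm] at hz
    have hmem := hmemU z n (hsmalln z (le_of_eq hz))
    rw [hgdef]
    calc ‖γ₁ (a + z • v) - γ₂ (a + z • v)‖ ≤ ‖γ₁ (a + z • v)‖ + ‖γ₂ (a + z • v)‖ :=
        norm_sub_le _ _
      _ ≤ 1 + 1 := add_le_add (hb1 _ hmem) (hb2 _ hmem)
      _ = 2 := by norm_num
  -- small-radius coefficient bound
  have hsmall : ∀ k, ‖p k‖ ≤ δ * (r⁻¹) ^ k := by
    intro k
    rw [hpq, hrcoe]
    refine cauchy_coeff_bound hr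
      (hcont.mono (Set.Subset.trans sphere_subset_closedBall
        (closedBall_subset_closedBall hr6))) ?_ k
    intro z hz
    rw [mem_sphere_zero_iff_norm] at hz
    have hzl : ‖z‖ * ‖v‖ < 1 / l := by
      rw [hz, hrdef]
      rw [div_mul_eq_mul_div, one_mul, div_lt_div_iff₀ (by positivity) hl']
      nlinarith
    exact hδl _ (hmemU z l hzl)
  -- coefficients applied at 1
  set c : ℕ → X := fun k => p k (fun _ => (1:ℂ)) with hcdef
  have hc_le : ∀ k, ‖c k‖ ≤ ‖p k‖ := by
    intro k
    calc ‖c k‖ ≤ ‖p k‖ * ∏ _i : Fin k, ‖(1:ℂ)‖ :=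
        (p k).le_opNorm _
      _ = ‖p k‖ := by simp
  -- Q bound on small coefficients
  have hc_small : ∀ k, ‖c k‖ ≤ δ * Q ^ k := by
    intro k
    refine (hc_le k).trans ((hsmall k).trans ?_)
    have hrinv : r⁻¹ ≤ Q := by
      rw [hrdef, one_div, inv_inv, hQdef, le_div_iff₀ (by positivity)]
      have : ‖v‖ * (3 * (n:ℝ)) ≤ (1 / (6 * n)) * (3 * n) := by gcongr
      calc 2 * (l:ℝ) * ‖v‖ * (3 * n) = (l:ℝ) * (‖v‖ * (3*n)) * 2 := by ring
        _ ≤ (l:ℝ) * ((1 / (6 * n)) * (3 * n)) * 2 := by gcongr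
        _ = (l:ℝ) := by field_simp; ring
    gcongr
  -- summation
  have hy1 : (1:ℂ) ∈ Metric.eball (0:ℂ) ((6:NNReal):ENNReal) := by
    rw [Metric.mem_eball, edist_zero_right]
    rw [show ‖(1:ℂ)‖ₑ = 1 by simp]
    norm_num
  have hsum : HasSum c (g 1) := by
    have := h6.hasSum hy1
    simpa [hcdef] using this
  set S : X := ∑ i ∈ Finset.range k₀, c i with hSdef
  have hT : HasSum (fun k => c (k + k₀)) (g 1 - S) := by
    refine (hasSum_nat_add_iff k₀).2 ?_
    rwa [sub_add_cancel]
  -- bound head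
  have hS : ‖S‖ ≤ ε / 2 := by
    have h1' : ‖S‖ ≤ ∑ i ∈ Finset.range k₀, (δ * Q ^ k₀) := by
      refine (norm_sum_le _ _).trans (Finset.sum_le_sum ?_)
      intro i hi
      refine (hc_small i).trans ?_
      exact mul_le_mul_of_nonneg_left
        (pow_le_pow_right₀ hQ1 (Finset.mem_range.1 hi).le) hδpos.le
    rw [Finset.sum_const, Finset.card_range, nsmul_eq_mul] at h1'
    have hδ2' := hδ2
    have : (k₀:ℝ) * (δ * Q ^ k₀) ≤ ε / 2 := by
      have hpos : (0:ℝ) < (k₀:ℝ) * Q ^ k₀ + 1 := by positivity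
      rw [div_div] at hδ2'
      calc (k₀:ℝ) * (δ * Q ^ k₀) = δ * ((k₀:ℝ) * Q ^ k₀) := by ring
        _ ≤ (ε / (2 * ((k₀:ℝ) * Q ^ k₀ + 1))) * ((k₀:ℝ) * Q ^ k₀) := by
            gcongr
        _ ≤ ε / 2 := by
            rw [div_mul_eq_mul_div, div_le_div_iff₀ (by positivity) (by norm_num)]
            nlinarith [pow_pos hQpos k₀]
    linarith
  -- bound tail
  have hgeo : Summable (fun k : ℕ => (2 * ((6:ℝ)⁻¹) ^ k₀) * ((6:ℝ)⁻¹) ^ k) :=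
    (summable_geometric_of_lt_one (by norm_num) (by norm_num)).mul_left _
  have htb : ∀ k : ℕ, ‖c (k + k₀)‖ ≤ (2 * ((6:ℝ)⁻¹) ^ k₀) * ((6:ℝ)⁻¹) ^ k := by
    intro k
    refine ((hc_le _).trans (hbig _)).trans ?_
    rw [pow_add]
    ring_nf
    apply le_of_eq
    ring
  have hsummable : Summable (fun k : ℕ => ‖c (k + k₀)‖) :=
    Summable.of_nonneg_of_le (fun k => norm_nonneg _) htb hgeo
  have hTnorm : ‖g 1 - S‖ ≤ ε / 2 := by
    rw [← hT.tsum_eq]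
    refine (norm_tsum_le_tsum_norm hsummable).trans ?_
    have h2' : (∑' k : ℕ, ‖c (k + k₀)‖) ≤
        ∑' k : ℕ, (2 * ((6:ℝ)⁻¹) ^ k₀) * ((6:ℝ)⁻¹) ^ k :=
      hsummable.tsum_le_tsum htb hgeo
    rw [tsum_mul_left, tsum_geometric_of_lt_one (by norm_num) (by norm_num)] at h2'
    refine h2'.trans ?_
    have : (1 - (6:ℝ)⁻¹)⁻¹ = 6/5 := by norm_num
    rw [this]
    nlinarith [hk₀]
  -- conclude
  have hx1 : γ₁ (a + v) - γ₂ (a + v) = g 1 := by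
    rw [hgdef]; simp
  rw [hx1]
  calc ‖g 1‖ = ‖S + (g 1 - S)‖ := by rw [add_sub_cancel]
    _ ≤ ‖S‖ + ‖g 1 - S‖ := norm_add_le _ _
    _ ≤ ε / 2 + ε / 2 := add_le_add hS hTnorm
    _ = ε := by ring
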